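/- For the Lebesgue–Poisson measure $L_\Lambda$ on finite subsets of a bounded box $\Lambda \subset \mathbb{R}^d$ and any measurable $F: \mathcal{X}_\Lambda^3 \to [0,\infty]$, the quantity $\int L_\Lambda(dX) \sum_{\xi \subset X} \int L_{\Lambda|\#\xi}(d\eta)\, F(\xi, \eta, X\setminus\xi)$ is unchanged when the first two arguments of $F$ are exchanged, i.e., it equals $\int L_\Lambda(dX) \sum_{\xi \subset X} \int L_{\Lambda|\#\xi}(d\eta)\, F(\eta, \xi, X\setminus\xi)$. -/

import Mathlib

open MeasureTheory ENNReal
open scoped Classical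

noncomputable section

/-- The set of points of a finite tuple, as a finite subset of `ℝᵈ`. -/
def tupleSet {d n : ℕ} (x : Fin n → EuclideanSpace ℝ (Fin d)) :
    Finset (EuclideanSpace ℝ (Fin d)) := Finset.image x Finset.univ

/-- Integration of a function of finite point configurations in `Λ` against
the Lebesgue–Poisson measure `L_Λ`:
`∫ L_Λ(dX) g(X) = ∑_{n≥0} (1/n!) ∫_{Λⁿ} g({x₁,…,xₙ}) dx₁⋯dxₙ`. -/
def lpInt {d : ℕ} (Λ : Set (EuclideanSpace ℝ (Fin d)))
    (g : Finset (EuclideanSpace ℝ (Fin d)) → ℝ≥0∞) : ℝ≥0∞ :=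
  ∑' n : ℕ, ((n.factorial : ℝ≥0∞))⁻¹ *
    ∫⁻ x in Set.univ.pi (fun _ : Fin n => Λ), g (tupleSet x)
      ∂(Measure.pi fun _ : Fin n => (volume : Measure (EuclideanSpace ℝ (Fin d))))

/-- Integration against `L_{Λ|N}`, the distribution of `N` independent points
thrown uniformly into `Λ`:
`∫ L_{Λ|N}(dη) g(η) = |Λ|^{-N} ∫_{Λᴺ} g({x₁,…,x_N}) dx₁⋯dx_N`. -/
def lpCond {d : ℕ} (Λ : Set (EuclideanSpace ℝ (Fin d))) (N : ℕ)
    (g : Finset (EuclideanSpace ℝ (Fin d)) → ℝ≥0∞) : ℝ≥0∞ :=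
  (volume Λ ^ N)⁻¹ *
    ∫⁻ x in Set.univ.pi (fun _ : Fin N => Λ), g (tupleSet x)
      ∂(Measure.pi fun _ : Fin N => (volume : Measure (EuclideanSpace ℝ (Fin d))))

/-! ### Auxiliary lemmas -/

lemma piCongrLeft_const_apply {ι ι' : Type*} {γ : Type*} (e : ι ≃ ι') (g : ι → γ) (b : ι') :
    Equiv.piCongrLeft (fun _ : ι' => γ) e g b = g (e.symm b) := by
  rw [Equiv.piCongrLeft_apply_eq_cast]
  exact cast_eq_iff_heq.2 HEq.rfl

lemma pi_restrict_univ {α : Type*} [MeasurableSpace α] (μ : Measure α) [SigmaFinite μ]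
    {Λ : Set α} (hΛ : MeasurableSet Λ) (ι : Type*) [Fintype ι] :
    (Measure.pi fun _ : ι => μ).restrict (Set.univ.pi fun _ => Λ) =
      Measure.pi fun _ : ι => μ.restrict Λ := by
  refine (Measure.pi_eq fun s hs => ?_).symm
  rw [Measure.restrict_apply (MeasurableSet.univ_pi hs)]
  have h2 : (Set.univ.pi s) ∩ (Set.univ.pi fun _ => Λ) = Set.univ.pi fun i => s i ∩ Λ := by
    ext x; simp [Set.mem_pi, forall_and]
  rw [h2, Measure.pi_pi]
  exact Finset.prod_congr rfl fun i _ => (Measure.restrict_apply (hs i)).symm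

lemma pi_pair_null {ι : Type*} [Fintype ι] {α : Type*} [MeasurableSpace α]
    [TopologicalSpace α] [BorelSpace α] [TopologicalSpace.MetrizableSpace α]
    [SecondCountableTopology α]
    (μ : Measure α) [SigmaFinite μ] [NullSingletonClass μ] {i j : ι} (hij : i ≠ j) :
    Measure.pi (fun _ : ι => μ) {x : ι → α | x i = x j} = 0 := by
  classical
  set s : Set (({a : ι // a = j} → α) × ({a : ι // ¬a = j} → α)) :=
    {p | p.2 ⟨i, hij⟩ = p.1 ⟨j, rfl⟩} with hs
  have hms : MeasurableSet s :=
    MeasureTheory.StronglyMeasurable.measurableSet_eq_fun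
      (((measurable_pi_apply _).comp measurable_snd).stronglyMeasurable)
      (((measurable_pi_apply _).comp measurable_fst).stronglyMeasurable)
  have hmp := measurePreserving_piEquivPiSubtypeProd (fun _ : ι => μ) (fun a => a = j)
  have hpre : {x : ι → α | x i = x j} =
      (MeasurableEquiv.piEquivPiSubtypeProd (fun _ : ι => α) (fun a => a = j)) ⁻¹' s := by
    ext x
    simp only [hs, Set.mem_setOf_eq, Set.mem_preimage, MeasurableEquiv.piEquivPiSubtypeProd,
      MeasurableEquiv.coe_mk, Equiv.piEquivPiSubtypeProd_apply]
  rw [hpre, hmp.measure_preimage hms.nullMeasurableSet, Measure.prod_apply hms]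
  have hz : ∀ u : {a : ι // a = j} → α,
      (Measure.pi fun _ : {a : ι // ¬a = j} => μ) (Prod.mk u ⁻¹' s) = 0 := by
    intro u
    have he : Prod.mk u ⁻¹' s = {v : {a : ι // ¬a = j} → α | v ⟨i, hij⟩ = u ⟨j, rfl⟩} := rfl
    rw [he]
    exact Measure.pi_hyperplane _ _ _
  simp [hz]

section Euclidean

variable {d : ℕ}

local notation "Euc" => EuclideanSpace ℝ (Fin d)

lemma image_eq_tupleSet {n : ℕ} (J : Finset (Fin n)) {k : ℕ} (hk : J.card = k)
    (x : Fin n → Euc) :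
    J.image x = tupleSet fun i : Fin k => x (J.orderEmbOfFin hk i) := by
  ext a
  simp only [tupleSet, Finset.mem_image, Finset.mem_univ, true_and]
  constructor
  · rintro ⟨j, hj, rfl⟩
    have : j ∈ Set.range (J.orderEmbOfFin hk) := by
      rw [Finset.range_orderEmbOfFin]; exact hj
    obtain ⟨i, rfl⟩ := this
    exact ⟨i, rfl⟩
  · rintro ⟨i, rfl⟩
    exact ⟨_, J.orderEmbOfFin_mem hk i, rfl⟩

lemma powerset_sum {M : Type*} [AddCommMonoid M] {n : ℕ}
    {x : Fin n → Euc} (hx : Function.Injective x) (f : Finset Euc → M) :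
    ∑ ξ ∈ (tupleSet x).powerset, f ξ =
      ∑ J ∈ (Finset.univ : Finset (Fin n)).powerset, f (J.image x) := by
  have h1 : (tupleSet x).powerset =
      Finset.image (fun J : Finset (Fin n) => J.image x) Finset.univ.powerset := by
    ext ξ
    simp only [tupleSet, Finset.mem_powerset, Finset.mem_image]
    constructor
    · intro hξ
      refine ⟨Finset.univ.filter (fun i => x i ∈ ξ), Finset.subset_univ _, ?_⟩
      ext a
      simp only [Finset.mem_image, Finset.mem_filter, Finset.mem_univ, true_and]
      constructor
      · rintro ⟨i, hi, rfl⟩; exact hi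
      · intro ha
        obtain ⟨i, -, rfl⟩ := Finset.mem_image.1 (hξ ha)
        exact ⟨i, ha, rfl⟩
    · rintro ⟨J, -, rfl⟩
      exact Finset.image_subset_image (Finset.subset_univ J)
  rw [h1, Finset.sum_image]
  intro J1 _ J2 _ h
  exact Finset.image_injective hx h

/-- The coordinate permutation of `Fin n ⊕ Fin k` exchanging the coordinates in `J`
(enumerated in increasing order) with the `Fin k` block. -/
def swapFun {n k : ℕ} (J : Finset (Fin n)) (hk : J.card = k) : Fin n ⊕ Fin k → Fin n ⊕ Fin k
  | Sum.inl j => if h : j ∈ J then Sum.inr ((J.orderIsoOfFin hk).symm ⟨j, h⟩) else Sum.inl j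
  | Sum.inr i => Sum.inl (J.orderIsoOfFin hk i : Fin n)

lemma swapFun_involutive {n k : ℕ} (J : Finset (Fin n)) (hk : J.card = k) :
    Function.Involutive (swapFun J hk) := by
  rintro (j | i)
  · by_cases h : j ∈ J
    · simp only [swapFun, dif_pos h]
      simp [swapFun]
    · simp [swapFun, h]
  · have hmem : (J.orderIsoOfFin hk i : Fin n) ∈ J := (J.orderIsoOfFin hk i).2
    simp only [swapFun, dif_pos hmem]
    congr 1
    have : (⟨(J.orderIsoOfFin hk i : Fin n), hmem⟩ : J) = J.orderIsoOfFin hk i :=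
      Subtype.ext rfl
    rw [this]
    simp

lemma meas_comp {n k m : ℕ} (J : Finset (Fin n)) (hk : J.card = k) (hm : Jᶜ.card = m)
    {G : (Fin k → Euc) × (Fin k → Euc) × (Fin m → Euc) → ℝ≥0∞} (hG : Measurable G) :
    Measurable (fun p : (Fin n → Euc) × (Fin k → Euc) =>
      G ((fun i => p.1 (J.orderEmbOfFin hk i)), p.2,
         (fun i => p.1 (Jᶜ.orderEmbOfFin hm i)))) := by
  refine hG.comp (Measurable.prodMk ?_ (Measurable.prodMk measurable_snd ?_))
  · exact measurable_pi_lambda _ fun i => (measurable_pi_apply _).comp measurable_fst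
  · exact measurable_pi_lambda _ fun i => (measurable_pi_apply _).comp measurable_fst

lemma meas_f (F : Finset Euc → Finset Euc → Finset Euc → ℝ≥0∞)
    (hF : ∀ n m k : ℕ, Measurable (fun p : (Fin n → Euc) × (Fin m → Euc) × (Fin k → Euc) =>
      F (tupleSet p.1) (tupleSet p.2.1) (tupleSet p.2.2)))
    {n k : ℕ} (J : Finset (Fin n)) (hk : J.card = k) :
    Measurable (fun p : (Fin n → Euc) × (Fin k → Euc) =>
      F (J.image p.1) (tupleSet p.2) (Jᶜ.image p.1)) := by
  have heq : (fun p : (Fin n → Euc) × (Fin k → Euc) =>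
      F (J.image p.1) (tupleSet p.2) (Jᶜ.image p.1)) =
      (fun p : (Fin n → Euc) × (Fin k → Euc) =>
        F (tupleSet fun i => p.1 (J.orderEmbOfFin hk i)) (tupleSet p.2)
          (tupleSet fun i => p.1 (Jᶜ.orderEmbOfFin rfl i))) := by
    funext p
    rw [image_eq_tupleSet J hk, image_eq_tupleSet Jᶜ rfl]
  rw [heq]
  exact meas_comp J hk rfl (hF k k Jᶜ.card)

lemma meas_g (F : Finset Euc → Finset Euc → Finset Euc → ℝ≥0∞)
    (hF : ∀ n m k : ℕ, Measurable (fun p : (Fin n → Euc) × (Fin m → Euc) × (Fin k → Euc) =>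
      F (tupleSet p.1) (tupleSet p.2.1) (tupleSet p.2.2)))
    {n k : ℕ} (J : Finset (Fin n)) (hk : J.card = k) :
    Measurable (fun p : (Fin n → Euc) × (Fin k → Euc) =>
      F (tupleSet p.2) (J.image p.1) (Jᶜ.image p.1)) := by
  have heq : (fun p : (Fin n → Euc) × (Fin k → Euc) =>
      F (tupleSet p.2) (J.image p.1) (Jᶜ.image p.1)) =
      (fun p : (Fin n → Euc) × (Fin k → Euc) =>
        F (tupleSet p.2) (tupleSet fun i => p.1 (J.orderEmbOfFin hk i))
          (tupleSet fun i => p.1 (Jᶜ.orderEmbOfFin rfl i))) := by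
    funext p
    rw [image_eq_tupleSet J hk, image_eq_tupleSet Jᶜ rfl]
  rw [heq]
  refine meas_comp J hk rfl
    (G := fun q => F (tupleSet q.2.1) (tupleSet q.1) (tupleSet q.2.2)) ?_
  have h2 : (fun q : (Fin k → Euc) × (Fin k → Euc) × (Fin Jᶜ.card → Euc) =>
      F (tupleSet q.2.1) (tupleSet q.1) (tupleSet q.2.2)) =
      (fun r : (Fin k → Euc) × (Fin k → Euc) × (Fin Jᶜ.card → Euc) =>
        F (tupleSet r.1) (tupleSet r.2.1) (tupleSet r.2.2)) ∘
      (fun q : (Fin k → Euc) × (Fin k → Euc) × (Fin Jᶜ.card → Euc) =>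
        (q.2.1, q.1, q.2.2)) := rfl
  rw [h2]
  exact (hF k k Jᶜ.card).comp ((measurable_fst.comp measurable_snd).prodMk
    (measurable_fst.prodMk (measurable_snd.comp measurable_snd)))

lemma core_swap (F : Finset Euc → Finset Euc → Finset Euc → ℝ≥0∞)
    (μ : Measure Euc) [SigmaFinite μ]
    (hF : ∀ n m k : ℕ, Measurable (fun p : (Fin n → Euc) × (Fin m → Euc) × (Fin k → Euc) =>
      F (tupleSet p.1) (tupleSet p.2.1) (tupleSet p.2.2)))
    {n k : ℕ} (J : Finset (Fin n)) (hk : J.card = k) :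
    ∫⁻ x, (∫⁻ η, F (J.image x) (tupleSet η) (Jᶜ.image x)
        ∂(Measure.pi fun _ : Fin k => μ)) ∂(Measure.pi fun _ : Fin n => μ) =
    ∫⁻ x, (∫⁻ η, F (tupleSet η) (J.image x) (Jᶜ.image x)
        ∂(Measure.pi fun _ : Fin k => μ)) ∂(Measure.pi fun _ : Fin n => μ) := by
  classical
  have hfm := meas_f F hF J hk
  have hgm := meas_g F hF J hk
  -- the swap permutation
  let e : (Fin n ⊕ Fin k) ≃ (Fin n ⊕ Fin k) :=
    ⟨swapFun J hk, swapFun J hk, (swapFun_involutive J hk).leftInverse,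
      (swapFun_involutive J hk).rightInverse⟩
  let Φ := MeasurableEquiv.sumPiEquivProdPi (fun _ : Fin n ⊕ Fin k => Euc)
  let P := MeasurableEquiv.piCongrLeft (fun _ : Fin n ⊕ Fin k => Euc) e
  have hmpΦ : MeasurePreserving Φ (Measure.pi fun _ : Fin n ⊕ Fin k => μ)
      ((Measure.pi fun _ : Fin n => μ).prod (Measure.pi fun _ : Fin k => μ)) :=
    measurePreserving_sumPiEquivProdPi (fun _ : Fin n ⊕ Fin k => μ)
  have hmpP : MeasurePreserving P (Measure.pi fun _ : Fin n ⊕ Fin k => μ)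
      (Measure.pi fun _ : Fin n ⊕ Fin k => μ) :=
    measurePreserving_piCongrLeft (fun _ : Fin n ⊕ Fin k => μ) e
  have hmpS : MeasurePreserving (fun p => Φ (P (Φ.symm p)))
      ((Measure.pi fun _ : Fin n => μ).prod (Measure.pi fun _ : Fin k => μ))
      ((Measure.pi fun _ : Fin n => μ).prod (Measure.pi fun _ : Fin k => μ)) :=
    (hmpΦ.comp hmpP).comp (hmpΦ.symm Φ)
  -- explicit description of the swap
  have hS1 : ∀ (p : (Fin n → Euc) × (Fin k → Euc)) (j : Fin n),
      (Φ (P (Φ.symm p))).1 j =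
        if h : j ∈ J then p.2 ((J.orderIsoOfFin hk).symm ⟨j, h⟩) else p.1 j := by
    intro p j
    show (P (Φ.symm p)) (Sum.inl j) = _
    rw [show (P : _ → _) = (Equiv.piCongrLeft (fun _ : Fin n ⊕ Fin k => Euc) e) from rfl]
    rw [piCongrLeft_const_apply]
    show (Φ.symm p) (swapFun J hk (Sum.inl j)) = _
    by_cases h : j ∈ J
    · rw [dif_pos h]
      simp only [swapFun, dif_pos h]
      rfl
    · rw [dif_neg h]
      simp only [swapFun, dif_neg h]
      rfl
  have hS2 : ∀ (p : (Fin n → Euc) × (Fin k → Euc)) (i : Fin k),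
      (Φ (P (Φ.symm p))).2 i = p.1 (J.orderIsoOfFin hk i) := by
    intro p i
    show (P (Φ.symm p)) (Sum.inr i) = _
    rw [show (P : _ → _) = (Equiv.piCongrLeft (fun _ : Fin n ⊕ Fin k => Euc) e) from rfl]
    rw [piCongrLeft_const_apply]
    rfl
  -- Finset identities
  have him1 : ∀ p : (Fin n → Euc) × (Fin k → Euc),
      J.image (Φ (P (Φ.symm p))).1 = tupleSet p.2 := by
    intro p
    ext a
    simp only [tupleSet, Finset.mem_image, Finset.mem_univ, true_and]
    constructor
    · rintro ⟨j, hj, ha⟩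
      rw [hS1 p j, dif_pos hj] at ha
      exact ⟨_, ha⟩
    · rintro ⟨i, rfl⟩
      refine ⟨(J.orderIsoOfFin hk i : Fin n), (J.orderIsoOfFin hk i).2, ?_⟩
      rw [hS1, dif_pos (J.orderIsoOfFin hk i).2]
      have : (⟨(J.orderIsoOfFin hk i : Fin n), (J.orderIsoOfFin hk i).2⟩ : J) =
          J.orderIsoOfFin hk i := Subtype.ext rfl
      rw [this]
      simp
  have him2 : ∀ p : (Fin n → Euc) × (Fin k → Euc),
      tupleSet (Φ (P (Φ.symm p))).2 = J.image p.1 := by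
    intro p
    ext a
    simp only [tupleSet, Finset.mem_image, Finset.mem_univ, true_and]
    constructor
    · rintro ⟨i, rfl⟩
      rw [hS2]
      exact ⟨_, (J.orderIsoOfFin hk i).2, rfl⟩
    · rintro ⟨j, hj, rfl⟩
      refine ⟨(J.orderIsoOfFin hk).symm ⟨j, hj⟩, ?_⟩
      rw [hS2]
      simp
  have him3 : ∀ p : (Fin n → Euc) × (Fin k → Euc),
      Jᶜ.image (Φ (P (Φ.symm p))).1 = Jᶜ.image p.1 := by
    intro p
    refine Finset.image_congr fun j hj => ?_
    rw [Finset.coe_compl, Set.mem_compl_iff, Finset.mem_coe] at hj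
    rw [hS1, dif_neg hj]
  calc
    ∫⁻ x, (∫⁻ η, F (J.image x) (tupleSet η) (Jᶜ.image x)
        ∂(Measure.pi fun _ : Fin k => μ)) ∂(Measure.pi fun _ : Fin n => μ)
      = ∫⁻ p : (Fin n → Euc) × (Fin k → Euc),
          F (J.image p.1) (tupleSet p.2) (Jᶜ.image p.1)
          ∂((Measure.pi fun _ : Fin n => μ).prod (Measure.pi fun _ : Fin k => μ)) :=
        (lintegral_prod _ hfm.aemeasurable).symm
    _ = ∫⁻ p : (Fin n → Euc) × (Fin k → Euc),
          F (tupleSet p.2) (J.image p.1) (Jᶜ.image p.1)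
          ∂((Measure.pi fun _ : Fin n => μ).prod (Measure.pi fun _ : Fin k => μ)) := by
        rw [← hmpS.lintegral_comp hfm]
        refine lintegral_congr fun p => ?_
        rw [him1 p, him2 p, him3 p]
    _ = ∫⁻ x, (∫⁻ η, F (tupleSet η) (J.image x) (Jᶜ.image x)
        ∂(Measure.pi fun _ : Fin k => μ)) ∂(Measure.pi fun _ : Fin n => μ) :=
        lintegral_prod _ hgm.aemeasurable

lemma per_n (F : Finset Euc → Finset Euc → Finset Euc → ℝ≥0∞)
    (Λ : Set Euc) (hΛ : MeasurableSet Λ)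
    (hF : ∀ n m k : ℕ, Measurable (fun p : (Fin n → Euc) × (Fin m → Euc) × (Fin k → Euc) =>
      F (tupleSet p.1) (tupleSet p.2.1) (tupleSet p.2.2)))
    [NullSingletonClass (volume : Measure Euc)] (n : ℕ) :
    ∫⁻ x, (∑ ξ ∈ (tupleSet x).powerset, lpCond Λ ξ.card fun η => F ξ η (tupleSet x \ ξ))
        ∂(Measure.pi fun _ : Fin n => (volume : Measure Euc).restrict Λ) =
    ∫⁻ x, (∑ ξ ∈ (tupleSet x).powerset, lpCond Λ ξ.card fun η => F η ξ (tupleSet x \ ξ))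
        ∂(Measure.pi fun _ : Fin n => (volume : Measure Euc).restrict Λ) := by
  classical
  have hae : ∀ᵐ x ∂(Measure.pi fun _ : Fin n => (volume : Measure Euc).restrict Λ),
      Function.Injective x := by
    rw [ae_iff]
    have h0 : (Measure.pi fun _ : Fin n => (volume : Measure Euc))
        {x | ¬Function.Injective x} = 0 := by
      have hsub : {x : Fin n → Euc | ¬Function.Injective x} ⊆
          ⋃ (i : Fin n) (j : Fin n) (_ : i ≠ j), {x | x i = x j} := by
        intro x hx
        simp only [Function.Injective, not_forall] at hx
        obtain ⟨i, j, hxy, hne⟩ := hx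
        exact Set.mem_iUnion.2 ⟨i, Set.mem_iUnion.2 ⟨j, Set.mem_iUnion.2 ⟨hne, hxy⟩⟩⟩
      refine measure_mono_null hsub ?_
      exact measure_iUnion_null fun i => measure_iUnion_null fun j =>
        measure_iUnion_null fun hij => pi_pair_null volume hij
    have hle : (Measure.pi fun _ : Fin n => (volume : Measure Euc).restrict Λ)
        {x | ¬Function.Injective x} ≤
        (Measure.pi fun _ : Fin n => (volume : Measure Euc)) {x | ¬Function.Injective x} := by
      rw [← pi_restrict_univ (volume : Measure Euc) hΛ (Fin n)]
      exact Measure.le_iff'.1 Measure.restrict_le_self _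
    exact le_antisymm (h0 ▸ hle) zero_le
  have h1 : ∀ᵐ x ∂(Measure.pi fun _ : Fin n => (volume : Measure Euc).restrict Λ),
      (∑ ξ ∈ (tupleSet x).powerset, lpCond Λ ξ.card fun η => F ξ η (tupleSet x \ ξ)) =
        ∑ J ∈ (Finset.univ : Finset (Fin n)).powerset,
          (volume Λ ^ J.card)⁻¹ *
            ∫⁻ η, F (J.image x) (tupleSet η) (Jᶜ.image x)
              ∂(Measure.pi fun _ : Fin J.card => (volume : Measure Euc).restrict Λ) := by
    refine hae.mono fun x hx => ?_
    rw [powerset_sum hx]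
    refine Finset.sum_congr rfl fun J _ => ?_
    have hcard : (J.image x).card = J.card := Finset.card_image_of_injective J hx
    have hsdiff : tupleSet x \ J.image x = Jᶜ.image x := by
      rw [Finset.compl_eq_univ_sdiff, Finset.image_sdiff Finset.univ J hx]
      rfl
    rw [hsdiff]
    simp only [lpCond, pi_restrict_univ (volume : Measure Euc) hΛ]
    rw [hcard]
  have h2 : ∀ᵐ x ∂(Measure.pi fun _ : Fin n => (volume : Measure Euc).restrict Λ),
      (∑ ξ ∈ (tupleSet x).powerset, lpCond Λ ξ.card fun η => F η ξ (tupleSet x \ ξ)) =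
        ∑ J ∈ (Finset.univ : Finset (Fin n)).powerset,
          (volume Λ ^ J.card)⁻¹ *
            ∫⁻ η, F (tupleSet η) (J.image x) (Jᶜ.image x)
              ∂(Measure.pi fun _ : Fin J.card => (volume : Measure Euc).restrict Λ) := by
    refine hae.mono fun x hx => ?_
    rw [powerset_sum hx]
    refine Finset.sum_congr rfl fun J _ => ?_
    have hcard : (J.image x).card = J.card := Finset.card_image_of_injective J hx
    have hsdiff : tupleSet x \ J.image x = Jᶜ.image x := by
      rw [Finset.compl_eq_univ_sdiff, Finset.image_sdiff Finset.univ J hx]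
      rfl
    rw [hsdiff]
    simp only [lpCond, pi_restrict_univ (volume : Measure Euc) hΛ]
    rw [hcard]
  rw [lintegral_congr_ae h1, lintegral_congr_ae h2]
  rw [lintegral_finset_sum _ fun J _ => ((meas_f F hF J rfl).lintegral_prod_right').const_mul _,
    lintegral_finset_sum _ fun J _ => ((meas_g F hF J rfl).lintegral_prod_right').const_mul _]
  refine Finset.sum_congr rfl fun J _ => ?_
  rw [lintegral_const_mul _ (meas_f F hF J rfl).lintegral_prod_right',
    lintegral_const_mul _ (meas_g F hF J rfl).lintegral_prod_right']
  congr 1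
  exact core_swap F ((volume : Measure Euc).restrict Λ) hF J rfl

end Euclidean

/-- the symmetry property (3.2) of the Lebesgue–Poisson measure:
the expression `∫ L_Λ(dX) ∑_{ξ⊂X} ∫ L_{Λ|#ξ}(dη) F(ξ,η,X∖ξ)` is invariant
under exchanging the first two arguments of `F`. -/
theorem lebesgue_poisson_symmetry {d : ℕ}
    (Λ : Set (EuclideanSpace ℝ (Fin d))) (hΛ : MeasurableSet Λ)
    (hb : Bornology.IsBounded Λ)
    (F : Finset (EuclideanSpace ℝ (Fin d)) → Finset (EuclideanSpace ℝ (Fin d)) →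
      Finset (EuclideanSpace ℝ (Fin d)) → ℝ≥0∞)
    (hF : ∀ n m k : ℕ, Measurable (fun p : (Fin n → EuclideanSpace ℝ (Fin d)) ×
        (Fin m → EuclideanSpace ℝ (Fin d)) × (Fin k → EuclideanSpace ℝ (Fin d)) =>
      F (tupleSet p.1) (tupleSet p.2.1) (tupleSet p.2.2))) :
    lpInt Λ (fun X => ∑ ξ ∈ X.powerset, lpCond Λ ξ.card (fun η => F ξ η (X \ ξ))) =
      lpInt Λ (fun X => ∑ ξ ∈ X.powerset, lpCond Λ ξ.card (fun η => F η ξ (X \ ξ))) := by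
  rcases Nat.eq_zero_or_pos d with hd | hd
  · subst hd
    haveI : Subsingleton (EuclideanSpace ℝ (Fin 0)) :=
      by infer_instance
    have hts : ∀ (ξ : Finset (EuclideanSpace ℝ (Fin 0)))
        (y : Fin ξ.card → EuclideanSpace ℝ (Fin 0)), tupleSet y = ξ := by
      intro ξ y
      ext a
      simp only [tupleSet, Finset.mem_image, Finset.mem_univ, true_and]
      constructor
      · rintro ⟨i, rfl⟩
        have hpos : 0 < ξ.card := i.pos
        obtain ⟨b, hb⟩ := Finset.card_pos.1 hpos
        exact (Subsingleton.elim b (y i)) ▸ hb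
      · intro ha
        have hpos : 0 < ξ.card := Finset.card_pos.2 ⟨a, ha⟩
        exact ⟨⟨0, hpos⟩, Subsingleton.elim _ _⟩
    refine congrArg (lpInt Λ) (funext fun X => Finset.sum_congr rfl fun ξ _ => ?_)
    simp only [lpCond]
    congr 1
    refine lintegral_congr fun y => ?_
    rw [hts ξ y]
  · haveI : Nonempty (Fin d) := ⟨⟨0, hd⟩⟩
    haveI : Nontrivial (EuclideanSpace ℝ (Fin d)) :=
      by infer_instance
    simp only [lpInt]
    refine tsum_congr fun n => ?_
    congr 1
    rw [pi_restrict_univ (volume : Measure (EuclideanSpace ℝ (Fin d))) hΛ (Fin n)]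
    exact per_n F Λ hΛ hF n

end
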